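/- arXiv:2409.01843 — 5 statements merged into one kernel-verified Lean document; each statement's English description precedes it below -/
import Mathlib

section
/- Let V : [0,n] → ℝ be differentiable and satisfy Thiele's differential equation dV/dt = δ(t)·V(t) + P(t) − μ(t)·(S(t) − V(t)) with V(0) = 0 and V(n) = M, and let V* : [0,n] → ℝ be differentiable and satisfy dV*/dt = δ(t)·V*(t) + P*(t) − μ(t)·(S(t) − V*(t)) − ν(t)·(C(t) − V*(t)) with V*(0) = 0 and V*(n) = M. Define the discount factor φ(t) = exp(−∫₀ᵗ (δ(r) + μ(r) + ν'(r)) dr), where ν' is the experienced lapse rate. Then ∫₀ⁿ φ(t)·(P(t) − P*(t)) dt = ∫₀ⁿ φ(t)·ν'(t)·(V(t) − V*(t)) dt + ∫₀ⁿ φ(t)·ν(t)·(V*(t) − C(t)) dt. -/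
open Set intervalIntegral MeasureTheory

/-- Proposition 1: the EPV of the premium reduction splits into the lapse-released
policy-value difference and the expected cash surplus on lapse. -/
theorem stmt_0 (n M : ℝ) (hn : 0 < n)
    (δ μ ν ν' P Pstar S C V Vstar φ : ℝ → ℝ)
    (hδ : ContinuousOn δ (Icc 0 n)) (hμ : ContinuousOn μ (Icc 0 n))
    (hν : ContinuousOn ν (Icc 0 n)) (hν' : ContinuousOn ν' (Icc 0 n))
    (hP : ContinuousOn P (Icc 0 n)) (hPstar : ContinuousOn Pstar (Icc 0 n))
    (hS : ContinuousOn S (Icc 0 n)) (hC : ContinuousOn C (Icc 0 n))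
    (hV : ∀ t ∈ Icc (0:ℝ) n,
      HasDerivAt V (δ t * V t + P t - μ t * (S t - V t)) t)
    (hV0 : V 0 = 0) (hVn : V n = M)
    (hVstar : ∀ t ∈ Icc (0:ℝ) n,
      HasDerivAt Vstar
        (δ t * Vstar t + Pstar t - μ t * (S t - Vstar t) - ν t * (C t - Vstar t)) t)
    (hVstar0 : Vstar 0 = 0) (hVstarn : Vstar n = M)
    (hφ : ∀ t, φ t = Real.exp (-∫ r in (0:ℝ)..t, (δ r + μ r + ν' r))) :
    ∫ t in (0:ℝ)..n, φ t * (P t - Pstar t)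
      = (∫ t in (0:ℝ)..n, φ t * ν' t * (V t - Vstar t))
        + ∫ t in (0:ℝ)..n, φ t * ν t * (Vstar t - C t) := by
  have hn' : (0:ℝ) ≤ n := hn.le
  have huIcc : uIcc (0:ℝ) n = Icc 0 n := uIcc_of_le hn'
  set f : ℝ → ℝ := fun t => δ t + μ t + ν' t with hfdef
  have hf : ContinuousOn f (Icc 0 n) := (hδ.add hμ).add hν'
  have hfInt : IntervalIntegrable f MeasureTheory.volume 0 n :=
    (huIcc ▸ hf).intervalIntegrable
  set I : ℝ → ℝ := fun t => ∫ r in (0:ℝ)..t, f r with hIdef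
  have hφeq : φ = fun t => Real.exp (-I t) := funext hφ
  subst hφeq
  -- continuity of basic pieces
  have hVc : ContinuousOn V (Icc 0 n) := fun t ht =>
    (hV t ht).continuousAt.continuousWithinAt
  have hVsc : ContinuousOn Vstar (Icc 0 n) := fun t ht =>
    (hVstar t ht).continuousAt.continuousWithinAt
  have hIc : ContinuousOn I (Icc 0 n) := by
    have := intervalIntegral.continuousOn_primitive_interval
      (a := (0:ℝ)) (b := n) (μ := MeasureTheory.volume) (f := f)
      (by rw [huIcc]; exact hf.integrableOn_Icc)
    rwa [huIcc] at this
  have hφc : ContinuousOn (fun t => Real.exp (-I t)) (Icc 0 n) :=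
    Real.continuous_exp.comp_continuousOn hIc.neg
  -- derivative of I at interior points
  have hIderiv : ∀ t ∈ Ioo (0:ℝ) n, HasDerivAt I (f t) t := by
    intro t ht
    have hmem : Icc (0:ℝ) n ∈ nhds t := Icc_mem_nhds ht.1 ht.2
    have hct : ContinuousAt f t := hf.continuousAt hmem
    have hmeas : StronglyMeasurableAtFilter f (nhds t) :=
      ⟨Icc 0 n, hmem, hf.aestronglyMeasurable measurableSet_Icc⟩
    have hsub : IntervalIntegrable f MeasureTheory.volume 0 t := by
      refine hfInt.mono_set ?_
      rw [huIcc, uIcc_of_le ht.1.le]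
      exact Icc_subset_Icc le_rfl ht.2.le
    exact intervalIntegral.integral_hasDerivAt_right hsub hmeas hct
  -- the key function and its derivative
  set g : ℝ → ℝ := fun t => Real.exp (-I t) * (V t - Vstar t) with hgdef
  set G : ℝ → ℝ := fun t =>
      Real.exp (-I t) * (P t - Pstar t)
      - Real.exp (-I t) * ν' t * (V t - Vstar t)
      - Real.exp (-I t) * ν t * (Vstar t - C t) with hGdef
  have hgc : ContinuousOn g (Icc 0 n) := hφc.mul (hVc.sub hVsc)
  have hgderiv : ∀ t ∈ Ioo (0:ℝ) n, HasDerivAt g (G t) t := by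
    intro t ht
    have ht' : t ∈ Icc (0:ℝ) n := Ioo_subset_Icc_self ht
    have h1 : HasDerivAt (fun t => Real.exp (-I t)) (Real.exp (-I t) * (-f t)) t :=
      ((hIderiv t ht).neg).exp
    have h2 : HasDerivAt (fun t => V t - Vstar t)
        ((δ t * V t + P t - μ t * (S t - V t))
          - (δ t * Vstar t + Pstar t - μ t * (S t - Vstar t) - ν t * (C t - Vstar t))) t :=
      (hV t ht').sub (hVstar t ht')
    have h3 := h1.mul h2
    convert h3 using 1
    · rfl
    · rfl
    · rfl
    simp only [hGdef, hfdef]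
    ring
  have hGint : IntervalIntegrable G MeasureTheory.volume 0 n := by
    apply ContinuousOn.intervalIntegrable
    rw [huIcc]
    exact ((hφc.mul (hP.sub hPstar)).sub ((hφc.mul hν').mul (hVc.sub hVsc))).sub
      ((hφc.mul hν).mul (hVsc.sub hC))
  have key : ∫ t in (0:ℝ)..n, G t = g n - g 0 :=
    intervalIntegral.integral_eq_sub_of_hasDerivAt_of_le hn' hgc hgderiv hGint
  have hgn : g n - g 0 = 0 := by
    simp [hgdef, hV0, hVn, hVstar0, hVstarn]
  -- integrability of each piece
  have hi1 : IntervalIntegrable (fun t => Real.exp (-I t) * (P t - Pstar t))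
      MeasureTheory.volume 0 n := by
    apply ContinuousOn.intervalIntegrable; rw [huIcc]; exact hφc.mul (hP.sub hPstar)
  have hi2 : IntervalIntegrable (fun t => Real.exp (-I t) * ν' t * (V t - Vstar t))
      MeasureTheory.volume 0 n := by
    apply ContinuousOn.intervalIntegrable; rw [huIcc]; exact (hφc.mul hν').mul (hVc.sub hVsc)
  have hi3 : IntervalIntegrable (fun t => Real.exp (-I t) * ν t * (Vstar t - C t))
      MeasureTheory.volume 0 n := by
    apply ContinuousOn.intervalIntegrable; rw [huIcc]; exact (hφc.mul hν).mul (hVsc.sub hC)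
  have hsplit : ∫ t in (0:ℝ)..n, G t
      = (∫ t in (0:ℝ)..n, Real.exp (-I t) * (P t - Pstar t))
        - (∫ t in (0:ℝ)..n, Real.exp (-I t) * ν' t * (V t - Vstar t))
        - ∫ t in (0:ℝ)..n, Real.exp (-I t) * ν t * (Vstar t - C t) := by
    rw [hGdef]
    rw [intervalIntegral.integral_sub (hi1.sub hi2) hi3,
      intervalIntegral.integral_sub hi1 hi2]
  rw [key, hgn] at hsplit
  linarith
end

section
/- Under the assumptions of the previous setting, if moreover the experienced lapse rate equals the premium-basis lapse rate, ν'(t) = ν(t) for all t ∈ [0,n], then the expected present value of the premium reduction equals the expected present value of the net cashflow on lapse: ∫₀ⁿ φ(t)·(P(t) − P*(t)) dt = ∫₀ⁿ φ(t)·ν(t)·(V(t) − C(t)) dt. -/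
open Set intervalIntegral

/-- Corollary 1: when experienced lapses equal the premium-basis lapses, the EPV of
the premium reduction equals the EPV of the net cashflow on lapse. -/
theorem stmt_1 (n M : ℝ) (hn : 0 < n)
    (δ μ ν P Pstar S C V Vstar φ : ℝ → ℝ)
    (hδ : ContinuousOn δ (Icc 0 n)) (hμ : ContinuousOn μ (Icc 0 n))
    (hν : ContinuousOn ν (Icc 0 n))
    (hP : ContinuousOn P (Icc 0 n)) (hPstar : ContinuousOn Pstar (Icc 0 n))
    (hS : ContinuousOn S (Icc 0 n)) (hC : ContinuousOn C (Icc 0 n))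
    (hV : ∀ t ∈ Icc (0:ℝ) n,
      HasDerivAt V (δ t * V t + P t - μ t * (S t - V t)) t)
    (hV0 : V 0 = 0) (hVn : V n = M)
    (hVstar : ∀ t ∈ Icc (0:ℝ) n,
      HasDerivAt Vstar
        (δ t * Vstar t + Pstar t - μ t * (S t - Vstar t) - ν t * (C t - Vstar t)) t)
    (hVstar0 : Vstar 0 = 0) (hVstarn : Vstar n = M)
    (hφ : ∀ t, φ t = Real.exp (-∫ r in (0:ℝ)..t, (δ r + μ r + ν r))) :
    ∫ t in (0:ℝ)..n, φ t * (P t - Pstar t)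
      = ∫ t in (0:ℝ)..n, φ t * ν t * (V t - C t) := by
  have hn' : (0:ℝ) ≤ n := le_of_lt hn
  have huIcc : uIcc (0:ℝ) n = Icc 0 n := uIcc_of_le hn'
  set f : ℝ → ℝ := fun t => δ t + μ t + ν t with hfdef
  have hf : ContinuousOn f (Icc 0 n) := (hδ.add hμ).add hν
  have hf_int : IntervalIntegrable f MeasureTheory.volume 0 n := by
    apply ContinuousOn.intervalIntegrable
    rwa [huIcc]
  set F : ℝ → ℝ := fun t => ∫ r in (0:ℝ)..t, f r with hFdef
  have hφeq : φ = fun t => Real.exp (-F t) := by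
    funext t; exact hφ t
  have hF_cont : ContinuousOn F (Icc 0 n) := by
    have := intervalIntegral.continuousOn_primitive_interval
      (f := f) (a := 0) (b := n) (μ := MeasureTheory.volume)
      (by rw [huIcc]; exact hf.integrableOn_Icc)
    rwa [huIcc] at this
  have hφ_cont : ContinuousOn φ (Icc 0 n) := by
    rw [hφeq]
    exact Real.continuous_exp.comp_continuousOn hF_cont.neg
  have hV_cont : ContinuousOn V (Icc 0 n) :=
    fun t ht => (hV t ht).continuousAt.continuousWithinAt
  have hVs_cont : ContinuousOn Vstar (Icc 0 n) :=
    fun t ht => (hVstar t ht).continuousAt.continuousWithinAt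
  -- derivative of φ at interior points
  have hφ_deriv : ∀ t ∈ Ioo (0:ℝ) n, HasDerivAt φ (φ t * (-f t)) t := by
    intro t ht
    have hmem : Icc (0:ℝ) n ∈ nhds t :=
      Icc_mem_nhds ht.1 ht.2
    have hct : ContinuousAt f t := hf.continuousAt hmem
    have hmeas : StronglyMeasurableAtFilter f (nhds t) MeasureTheory.volume := by
      refine ⟨Ioo 0 n, Ioo_mem_nhds ht.1 ht.2, ?_⟩
      exact ((hf.mono Ioo_subset_Icc_self).aestronglyMeasurable measurableSet_Ioo)
    have hint : IntervalIntegrable f MeasureTheory.volume 0 t := by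
      apply hf_int.mono_set
      rw [huIcc, uIcc_of_le (le_of_lt ht.1)]
      exact Icc_subset_Icc le_rfl (le_of_lt ht.2)
    have hF' : HasDerivAt F (f t) t :=
      intervalIntegral.integral_hasDerivAt_right hint hmeas hct
    have h2 : HasDerivAt (fun u => Real.exp (-F u)) (Real.exp (-F t) * (-f t)) t :=
      (hF'.neg).exp
    rw [hφ t, hφeq]
    exact h2
  set g : ℝ → ℝ := fun t => φ t * (V t - Vstar t) with hgdef
  set g' : ℝ → ℝ := fun t => φ t * (P t - Pstar t) - φ t * ν t * (V t - C t) with hg'def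
  have hg_deriv : ∀ t ∈ Ioo (0:ℝ) n, HasDerivAt g (g' t) t := by
    intro t ht
    have htI : t ∈ Icc (0:ℝ) n := Ioo_subset_Icc_self ht
    have h1 := (hφ_deriv t ht).mul ((hV t htI).sub (hVstar t htI))
    convert h1 using 1
    · rfl
    · rfl
    · rfl
    simp only [hg'def, hfdef, Pi.sub_apply]
    ring
  have hg'_cont : ContinuousOn g' (Icc 0 n) :=
    (hφ_cont.mul (hP.sub hPstar)).sub ((hφ_cont.mul hν).mul (hV_cont.sub hC))
  have hg'_int : IntervalIntegrable g' MeasureTheory.volume 0 n := by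
    apply ContinuousOn.intervalIntegrable; rwa [huIcc]
  have hg_cont : ContinuousOn g (Icc 0 n) := hφ_cont.mul (hV_cont.sub hVs_cont)
  have key : ∫ t in (0:ℝ)..n, g' t = g n - g 0 := by
    apply intervalIntegral.integral_eq_sub_of_hasDeriv_right_of_le hn' hg_cont
      (fun t ht => (hg_deriv t ht).hasDerivWithinAt) hg'_int
  have hgn : g n = 0 := by simp [hgdef, hVn, hVstarn]
  have hg0 : g 0 = 0 := by simp [hgdef, hV0, hVstar0]
  have hA : IntervalIntegrable (fun t => φ t * (P t - Pstar t)) MeasureTheory.volume 0 n := by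
    apply ContinuousOn.intervalIntegrable
    rw [huIcc]; exact hφ_cont.mul (hP.sub hPstar)
  have hB : IntervalIntegrable (fun t => φ t * ν t * (V t - C t)) MeasureTheory.volume 0 n := by
    apply ContinuousOn.intervalIntegrable
    rw [huIcc]; exact (hφ_cont.mul hν).mul (hV_cont.sub hC)
  have : ∫ t in (0:ℝ)..n, (φ t * (P t - Pstar t) - φ t * ν t * (V t - C t)) = 0 := by
    rw [show (fun t => φ t * (P t - Pstar t) - φ t * ν t * (V t - C t)) = g' from rfl] at *
    rw [key, hgn, hg0]; ring
  rw [intervalIntegral.integral_sub hA hB] at this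
  linarith
end

section
/- Let V satisfy dV/dt = δ(t)·V(t) + P(t) − μ(t)·(S(t) − V(t)) with V(0)=0, V(n)=M, and let V* satisfy dV*/dt = δ(t)·V*(t) + P*(t) − μ(t)·(S(t) − V*(t)) − ν(t)·(C(t) − V*(t)) with V*(0)=0, V*(n)=M. Define emerging surplus rates under experience lapse rate ν': W(t) = −ν'(t)·(C(t) − V(t)) and W*(t) = (P(t) − P*(t)) − (ν'(t) − ν(t))·(C(t) − V*(t)). With φ(t) = exp(−∫₀ᵗ (δ(r) + μ(r) + ν'(r)) dr), the expected present values of surplus under the two valuation bases coincide: ∫₀ⁿ φ(t)·W(t) dt = ∫₀ⁿ φ(t)·W*(t) dt. -/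
open Set intervalIntegral

/-- Corollary 2: the EPV, on the experience basis, of emerging surplus is the same
under the premium-basis valuation and the net-premium valuation with lapses. -/
theorem stmt_2 (n M : ℝ) (hn : 0 < n)
    (δ μ ν ν' P Pstar S C V Vstar W Wstar φ : ℝ → ℝ)
    (hδ : ContinuousOn δ (Icc 0 n)) (hμ : ContinuousOn μ (Icc 0 n))
    (hν : ContinuousOn ν (Icc 0 n)) (hν' : ContinuousOn ν' (Icc 0 n))
    (hP : ContinuousOn P (Icc 0 n)) (hPstar : ContinuousOn Pstar (Icc 0 n))
    (hS : ContinuousOn S (Icc 0 n)) (hC : ContinuousOn C (Icc 0 n))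
    (hV : ∀ t ∈ Icc (0:ℝ) n,
      HasDerivAt V (δ t * V t + P t - μ t * (S t - V t)) t)
    (hV0 : V 0 = 0) (hVn : V n = M)
    (hVstar : ∀ t ∈ Icc (0:ℝ) n,
      HasDerivAt Vstar
        (δ t * Vstar t + Pstar t - μ t * (S t - Vstar t) - ν t * (C t - Vstar t)) t)
    (hVstar0 : Vstar 0 = 0) (hVstarn : Vstar n = M)
    (hW : ∀ t, W t = -(ν' t) * (C t - V t))
    (hWstar : ∀ t, Wstar t = (P t - Pstar t) - (ν' t - ν t) * (C t - Vstar t))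
    (hφ : ∀ t, φ t = Real.exp (-∫ r in (0:ℝ)..t, (δ r + μ r + ν' r))) :
    ∫ t in (0:ℝ)..n, φ t * W t = ∫ t in (0:ℝ)..n, φ t * Wstar t := by
  have hfc : ContinuousOn (fun t => δ t + μ t + ν' t) (Icc 0 n) := (hδ.add hμ).add hν'
  have hVc : ContinuousOn V (Icc 0 n) := fun t ht =>
    ((hV t ht).continuousAt).continuousWithinAt
  have hVsc : ContinuousOn Vstar (Icc 0 n) := fun t ht =>
    ((hVstar t ht).continuousAt).continuousWithinAt
  have huIcc : uIcc (0:ℝ) n = Icc 0 n := uIcc_of_le hn.le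
  have hfint : ∀ t ∈ Icc (0:ℝ) n,
      IntervalIntegrable (fun r => δ r + μ r + ν' r) MeasureTheory.volume 0 t := by
    intro t ht
    refine (hfc.mono ?_).intervalIntegrable
    rw [uIcc_of_le ht.1]
    exact Icc_subset_Icc le_rfl ht.2
  have hφeq : φ = fun u => Real.exp (-∫ r in (0:ℝ)..u, (δ r + μ r + ν' r)) := funext hφ
  -- φ is continuous on [0, n]
  have hφc : ContinuousOn φ (Icc 0 n) := by
    have hFcont : ContinuousOn (fun t => ∫ r in (0:ℝ)..t, (δ r + μ r + ν' r)) (Icc 0 n) := by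
      rw [← huIcc]
      exact intervalIntegral.continuousOn_primitive_interval'
        (hfint n ⟨hn.le, le_rfl⟩) (by rw [huIcc]; exact ⟨le_rfl, hn.le⟩)
    rw [hφeq]
    exact Real.continuous_exp.comp_continuousOn hFcont.neg
  -- φ differentiable on the interior
  have hφd : ∀ t ∈ Ioo (0:ℝ) n, HasDerivAt φ (-(δ t + μ t + ν' t) * φ t) t := by
    intro t ht
    have htIcc : t ∈ Icc (0:ℝ) n := Ioo_subset_Icc_self ht
    have hmeas : StronglyMeasurableAtFilter (fun r => δ r + μ r + ν' r) (nhds t)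
        MeasureTheory.volume :=
      (ContinuousOn.stronglyMeasurableAtFilter isOpen_Ioo
        (hfc.mono Ioo_subset_Icc_self)) t ht
    have hct : ContinuousAt (fun r => δ r + μ r + ν' r) t :=
      (hfc t htIcc).continuousAt (Icc_mem_nhds ht.1 ht.2)
    have hF : HasDerivAt (fun u => ∫ r in (0:ℝ)..u, (δ r + μ r + ν' r)) (δ t + μ t + ν' t) t :=
      intervalIntegral.integral_hasDerivAt_right (hfint t htIcc) hmeas hct
    have hd : HasDerivAt (fun u => Real.exp (-∫ r in (0:ℝ)..u, (δ r + μ r + ν' r)))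
        (Real.exp (-∫ r in (0:ℝ)..t, (δ r + μ r + ν' r)) * (-(δ t + μ t + ν' t))) t :=
      HasDerivAt.exp hF.neg
    rw [hφeq]
    convert hd using 1
    beta_reduce
    ring
  -- derivative of g = φ * (V - Vstar)
  have hgc : ContinuousOn (fun t => φ t * (V t - Vstar t)) (Icc 0 n) := hφc.mul (hVc.sub hVsc)
  have hgd : ∀ t ∈ Ioo (0:ℝ) n,
      HasDerivAt (fun t => φ t * (V t - Vstar t)) (-(φ t * (W t - Wstar t))) t := by
    intro t ht
    have htIcc : t ∈ Icc (0:ℝ) n := Ioo_subset_Icc_self ht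
    have hDd : HasDerivAt (fun t => V t - Vstar t)
        ((δ t * V t + P t - μ t * (S t - V t)) -
          (δ t * Vstar t + Pstar t - μ t * (S t - Vstar t) - ν t * (C t - Vstar t))) t :=
      (hV t htIcc).sub (hVstar t htIcc)
    have := (hφd t ht).mul hDd
    refine this.congr_deriv ?_
    rw [hW, hWstar]
    ring
  have hWc : ContinuousOn W (Icc 0 n) := by
    have heq : W = fun t => -(ν' t) * (C t - V t) := funext hW
    rw [heq]; exact hν'.neg.mul (hC.sub hVc)
  have hWsc : ContinuousOn Wstar (Icc 0 n) := by
    have heq : Wstar = fun t => (P t - Pstar t) - (ν' t - ν t) * (C t - Vstar t) := funext hWstar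
    rw [heq]; exact (hP.sub hPstar).sub ((hν'.sub hν).mul (hC.sub hVsc))
  -- FTC
  have hint : IntervalIntegrable (fun t => -(φ t * (W t - Wstar t)))
      MeasureTheory.volume 0 n := by
    refine ContinuousOn.intervalIntegrable ?_
    rw [huIcc]
    exact (hφc.mul (hWc.sub hWsc)).neg
  have hFTC := intervalIntegral.integral_eq_sub_of_hasDerivAt_of_le hn.le hgc hgd hint
  rw [hVn, hVstarn, hV0, hVstar0] at hFTC
  simp only [sub_self, mul_zero, sub_zero] at hFTC
  -- split the integral
  have hφWint : IntervalIntegrable (fun t => φ t * W t) MeasureTheory.volume 0 n := by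
    refine ContinuousOn.intervalIntegrable ?_
    rw [huIcc]; exact hφc.mul hWc
  have hφWsint : IntervalIntegrable (fun t => φ t * Wstar t) MeasureTheory.volume 0 n := by
    refine ContinuousOn.intervalIntegrable ?_
    rw [huIcc]; exact hφc.mul hWsc
  have hsplit : (∫ t in (0:ℝ)..n, -(φ t * (W t - Wstar t)))
      = -((∫ t in (0:ℝ)..n, φ t * W t) - ∫ t in (0:ℝ)..n, φ t * Wstar t) := by
    rw [intervalIntegral.integral_neg, ← intervalIntegral.integral_sub hφWint hφWsint]
    congr 1
    apply intervalIntegral.integral_congr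
    intro t _
    ring
  rw [hsplit] at hFTC
  linarith [hFTC]
end

section
/- Let V and V* satisfy the two Thiele equations (without and with lapses respectively) with the same boundary values V(0) = V*(0) = 0 and V(n) = V*(n) = M, and let φ̃ : [0,n] → ℝ be any differentiable strictly positive function. Then ∫₀ⁿ d/dt (φ̃(t)·(V*(t) − V(t))) dt = 0, and in particular, taking φ̃(t) = exp(−∫₀ᵗ (δ(r)+μ(r)+ν(r)) dr), one obtains ∫₀ⁿ φ̃(t)·(P(t) − P*(t)) dt = ∫₀ⁿ φ̃(t)·ν(t)·(V(t) − C(t)) dt when the experience lapse rate is taken equal to ν. -/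
open Set intervalIntegral

/-- The integrated derivative of φ̃·(V*−V) vanishes for any positive differentiable
discount function φ̃, and the particular choice φ̃ = exp(−∫(δ+μ+ν)) yields the
premium-reduction identity when the experience lapse rate equals ν. -/
theorem stmt_11 (n M : ℝ) (hn : 0 < n)
    (δ μ ν P Pstar S C V Vstar φt : ℝ → ℝ)
    (hδ : ContinuousOn δ (Icc 0 n)) (hμ : ContinuousOn μ (Icc 0 n))
    (hν : ContinuousOn ν (Icc 0 n)) (hP : ContinuousOn P (Icc 0 n))
    (hPstar : ContinuousOn Pstar (Icc 0 n)) (hS : ContinuousOn S (Icc 0 n))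
    (hC : ContinuousOn C (Icc 0 n))
    (hV : ∀ t ∈ Icc (0:ℝ) n,
      HasDerivAt V (δ t * V t + P t - μ t * (S t - V t)) t)
    (hV0 : V 0 = 0) (hVn : V n = M)
    (hVstar : ∀ t ∈ Icc (0:ℝ) n,
      HasDerivAt Vstar
        (δ t * Vstar t + Pstar t - μ t * (S t - Vstar t) - ν t * (C t - Vstar t)) t)
    (hVstar0 : Vstar 0 = 0) (hVstarn : Vstar n = M)
    (hφdiff : Differentiable ℝ φt) (hφpos : ∀ t, 0 < φt t) :
    (∫ t in (0:ℝ)..n, deriv (fun s => φt s * (Vstar s - V s)) t) = 0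
      ∧ ((∫ t in (0:ℝ)..n,
            Real.exp (-∫ r in (0:ℝ)..t, (δ r + μ r + ν r)) * (P t - Pstar t))
          = ∫ t in (0:ℝ)..n,
              Real.exp (-∫ r in (0:ℝ)..t, (δ r + μ r + ν r)) * ν t
                * (V t - C t)) := by
  have hn' : (0:ℝ) ≤ n := hn.le
  have hIcc : uIcc (0:ℝ) n = Icc 0 n := uIcc_of_le hn'
  have hVcont : ContinuousOn V (Icc 0 n) := fun t ht =>
    (hV t ht).continuousAt.continuousWithinAt
  have hVstarcont : ContinuousOn Vstar (Icc 0 n) := fun t ht =>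
    (hVstar t ht).continuousAt.continuousWithinAt
  constructor
  · -- Part 1
    set f := fun s => φt s * (Vstar s - V s) with hf
    have hcont : ContinuousOn f (Icc 0 n) :=
      hφdiff.continuous.continuousOn.mul (hVstarcont.sub hVcont)
    have hder : ∀ x ∈ Ioo (0:ℝ) n, HasDerivAt f (deriv f x) x := by
      intro x hx
      have hx' : x ∈ Icc (0:ℝ) n := Ioo_subset_Icc_self hx
      have h1 := (hφdiff x).hasDerivAt.mul ((hVstar x hx').sub (hV x hx'))
      exact h1.deriv ▸ h1
    by_cases hint : IntervalIntegrable (deriv f) MeasureTheory.volume 0 n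
    · rw [integral_eq_sub_of_hasDerivAt_of_le hn' hcont hder hint]
      simp [hf, hVn, hVstarn, hV0, hVstar0]
    · exact intervalIntegral.integral_undef hint
  · -- Part 2
    set g := fun r => δ r + μ r + ν r with hg
    have hgcont : ContinuousOn g (Icc 0 n) := (hδ.add hμ).add hν
    set F := fun t => ∫ r in (0:ℝ)..t, g r with hF
    have hFcont : ContinuousOn F (Icc 0 n) := by
      rw [← hIcc]
      exact continuousOn_primitive_interval (hIcc ▸ hgcont.integrableOn_compact
        (hIcc ▸ isCompact_Icc))
    have hFder : ∀ t ∈ Ioo (0:ℝ) n, HasDerivAt F (g t) t := by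
      intro t ht
      have hsub : uIcc (0:ℝ) t ⊆ Icc 0 n := by
        rw [uIcc_of_le ht.1.le]
        exact Icc_subset_Icc le_rfl ht.2.le
      have hgi : IntervalIntegrable g MeasureTheory.volume 0 t :=
        (hgcont.mono hsub).intervalIntegrable
      have hgIoo : ContinuousOn g (Ioo 0 n) := hgcont.mono Ioo_subset_Icc_self
      have hmeas := hgIoo.stronglyMeasurableAtFilter (μ := MeasureTheory.volume) isOpen_Ioo t ht
      have hct : ContinuousAt g t :=
        hgIoo.continuousAt (isOpen_Ioo.mem_nhds ht)
      exact integral_hasDerivAt_right hgi hmeas hct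
    set φ := fun t => Real.exp (-F t) with hφ
    have hφcont : ContinuousOn φ (Icc 0 n) :=
      Real.continuous_exp.comp_continuousOn hFcont.neg
    set H := fun t => φ t * (Vstar t - V t) with hH
    have hHcont : ContinuousOn H (Icc 0 n) := hφcont.mul (hVstarcont.sub hVcont)
    set h := fun t => φ t * (Pstar t - P t) + φ t * ν t * (V t - C t) with hh
    have hhcont : ContinuousOn h (Icc 0 n) :=
      (hφcont.mul (hPstar.sub hP)).add ((hφcont.mul hν).mul (hVcont.sub hC))
    have hHder : ∀ t ∈ Ioo (0:ℝ) n, HasDerivAt H (h t) t := by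
      intro t ht
      have ht' : t ∈ Icc (0:ℝ) n := Ioo_subset_Icc_self ht
      have hφd : HasDerivAt φ (Real.exp (-F t) * (-g t)) t :=
        ((hFder t ht).neg).exp
      have : HasDerivAt (fun y => φ y * (Vstar y - V y)) _ t := hφd.mul ((hVstar t ht').sub (hV t ht'))
      convert this using 1
      simp only [hφ, hg, hh]
      ring
    have key : (∫ t in (0:ℝ)..n, h t) = H n - H 0 := by
      refine integral_eq_sub_of_hasDerivAt_of_le hn' hHcont hHder ?_
      exact (hhcont.mono (le_of_eq hIcc)).intervalIntegrable
    have hH0 : H 0 = 0 := by simp [hH, hV0, hVstar0]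
    have hHn : H n = 0 := by simp [hH, hVn, hVstarn]
    rw [hH0, hHn, sub_zero] at key
    have h1int : IntervalIntegrable (fun t => φ t * (Pstar t - P t))
        MeasureTheory.volume 0 n :=
      ((hφcont.mul (hPstar.sub hP)).mono (le_of_eq hIcc)).intervalIntegrable
    have h2int : IntervalIntegrable (fun t => φ t * ν t * (V t - C t))
        MeasureTheory.volume 0 n :=
      (((hφcont.mul hν).mul (hVcont.sub hC)).mono (le_of_eq hIcc)).intervalIntegrable
    rw [hh] at key
    rw [intervalIntegral.integral_add h1int h2int] at key
    have hrw : (fun t => φ t * (P t - Pstar t))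
        = fun t => -(φ t * (Pstar t - P t)) := by funext t; ring
    have : (∫ t in (0:ℝ)..n, φ t * (P t - Pstar t))
        = ∫ t in (0:ℝ)..n, φ t * ν t * (V t - C t) := by
      rw [hrw, intervalIntegral.integral_neg]
      linarith
    exact this
end

section
/- Let φ(t) = exp(−∫₀ᵗ (δ(r) + μ(r) + ν'(r)) dr) with δ, μ, ν' continuous, and let V, V* be differentiable on [0,n] with V(0) = V*(0) and V(n) = V*(n). Suppose d/dt(φ·V)(t) = −φ(t)·ν'(t)·V(t) + φ(t)·(P(t) − μ(t)·S(t)) and d/dt(φ·V*)(t) = −φ(t)·(ν'(t) − ν(t))·V*(t) + φ(t)·(P*(t) − μ(t)·S(t) − ν(t)·C(t)). Then ∫₀ⁿ φ·(P − P*) dt = ∫₀ⁿ φ·ν'·(V − V*) dt + ∫₀ⁿ φ·ν·(V* − C) dt. -/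
open Set intervalIntegral

/-- The integration step in the proof of Proposition 1: given the derivative
identities for φ·V and φ·V* and shared boundary values, integrating over the
policy term yields the premium-reduction decomposition. -/
theorem stmt_16 (n : ℝ) (hn : 0 < n)
    (δ μ ν ν' P Pstar S C V Vstar φ : ℝ → ℝ)
    (hδ : ContinuousOn δ (Icc 0 n)) (hμ : ContinuousOn μ (Icc 0 n))
    (hν : ContinuousOn ν (Icc 0 n)) (hν' : ContinuousOn ν' (Icc 0 n))
    (hP : ContinuousOn P (Icc 0 n)) (hPstar : ContinuousOn Pstar (Icc 0 n))
    (hS : ContinuousOn S (Icc 0 n)) (hC : ContinuousOn C (Icc 0 n))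
    (hVcont : ContinuousOn V (Icc 0 n)) (hVstarcont : ContinuousOn Vstar (Icc 0 n))
    (hφ : ∀ t, φ t = Real.exp (-∫ r in (0:ℝ)..t, (δ r + μ r + ν' r)))
    (hbdry0 : V 0 = Vstar 0) (hbdryn : V n = Vstar n)
    (hdV : ∀ t ∈ Icc (0:ℝ) n,
      HasDerivAt (fun s => φ s * V s)
        (-(φ t) * ν' t * V t + φ t * (P t - μ t * S t)) t)
    (hdVstar : ∀ t ∈ Icc (0:ℝ) n,
      HasDerivAt (fun s => φ s * Vstar s)
        (-(φ t) * (ν' t - ν t) * Vstar t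
          + φ t * (Pstar t - μ t * S t - ν t * C t)) t) :
    ∫ t in (0:ℝ)..n, φ t * (P t - Pstar t)
      = (∫ t in (0:ℝ)..n, φ t * ν' t * (V t - Vstar t))
        + ∫ t in (0:ℝ)..n, φ t * ν t * (Vstar t - C t) := by
  have huIcc : uIcc (0:ℝ) n = Icc 0 n := uIcc_of_le hn.le
  -- φ is continuous on Icc 0 n
  have hfint : MeasureTheory.IntegrableOn (fun r => δ r + μ r + ν' r) (uIcc (0:ℝ) n) := by
    rw [huIcc]
    exact ((hδ.add hμ).add hν').integrableOn_compact isCompact_Icc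
  have hφcont : ContinuousOn φ (Icc 0 n) := by
    have h1 : ContinuousOn (fun t => Real.exp (-∫ r in (0:ℝ)..t, (δ r + μ r + ν' r)))
        (Icc 0 n) := by
      apply Real.continuous_exp.comp_continuousOn
      have := intervalIntegral.continuousOn_primitive_interval (f := fun r => δ r + μ r + ν' r)
        (a := 0) (b := n) (μ := MeasureTheory.volume) hfint
      rw [huIcc] at this
      exact this.neg
    exact h1.congr fun t _ => hφ t
  -- the derivative of g = φ·V − φ·V*
  have hg : ∀ t ∈ uIcc (0:ℝ) n,
      HasDerivAt (fun s => φ s * V s - φ s * Vstar s)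
        (φ t * (P t - Pstar t) - φ t * ν' t * (V t - Vstar t)
          - φ t * ν t * (Vstar t - C t)) t := by
    intro t ht
    rw [huIcc] at ht
    have := (hdV t ht).sub (hdVstar t ht)
    exact this.congr_deriv (by ring)
  have hDcont : ContinuousOn
      (fun t => φ t * (P t - Pstar t) - φ t * ν' t * (V t - Vstar t)
        - φ t * ν t * (Vstar t - C t)) (Icc 0 n) :=
    ((hφcont.mul (hP.sub hPstar)).sub ((hφcont.mul hν').mul (hVcont.sub hVstarcont))).sub
      ((hφcont.mul hν).mul (hVstarcont.sub hC))
  have hDint : IntervalIntegrable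
      (fun t => φ t * (P t - Pstar t) - φ t * ν' t * (V t - Vstar t)
        - φ t * ν t * (Vstar t - C t)) MeasureTheory.volume 0 n := by
    apply ContinuousOn.intervalIntegrable
    rwa [huIcc]
  have hFTC := intervalIntegral.integral_eq_sub_of_hasDerivAt hg hDint
  simp only [hbdry0, hbdryn, sub_self] at hFTC
  have hi1 : IntervalIntegrable (fun t => φ t * (P t - Pstar t)) MeasureTheory.volume 0 n := by
    apply ContinuousOn.intervalIntegrable; rw [huIcc]; exact hφcont.mul (hP.sub hPstar)
  have hi2 : IntervalIntegrable (fun t => φ t * ν' t * (V t - Vstar t))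
      MeasureTheory.volume 0 n := by
    apply ContinuousOn.intervalIntegrable; rw [huIcc]
    exact (hφcont.mul hν').mul (hVcont.sub hVstarcont)
  have hi3 : IntervalIntegrable (fun t => φ t * ν t * (Vstar t - C t))
      MeasureTheory.volume 0 n := by
    apply ContinuousOn.intervalIntegrable; rw [huIcc]
    exact (hφcont.mul hν).mul (hVstarcont.sub hC)
  rw [intervalIntegral.integral_sub (hi1.sub hi2) hi3,
    intervalIntegral.integral_sub hi1 hi2] at hFTC
  linarith
end
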